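/- Let A be a commutative ring, r a positive integer, λ ∈ ℤ^r with λ ≠ 0, d ≥ 0, and c₀,…,c_d ∈ A such that c₀ and c_d are units of A. Set s = Σ_{k=0}^{d} (monomial supported at k·λ with coefficient c_k) ∈ A[ℤ^r]. Then for every commutative A-algebra B, the image of s in B[ℤ^r] is a non-zero-divisor. In particular, s is a non-zero-divisor in A[ℤ^r], and for every ideal 𝔭 of A the image of s in (A/𝔭)[ℤ^r] is a non-zero-divisor. -/

import Mathlib

universe u v

open AddMonoidAlgebra in
private lemma key_nzd {G : Type*} [AddCommGroup G] [LinearOrder G] [IsOrderedAddMonoid G] {B : Type v} [CommRing B]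
    {g : G} (hg : g ≠ 0) (d : ℕ) (b : ℕ → B) (hbd : IsUnit (b d)) :
    (∑ k ∈ Finset.range (d + 1), AddMonoidAlgebra.single (k • g) (b k))
      ∈ nonZeroDivisors (AddMonoidAlgebra B G) := by
  rw [mem_nonZeroDivisors_iff_right]
  intro x hx
  by_contra hx0
  have hsupp : x.coeff.support.Nonempty := Finsupp.support_nonempty_iff.2 (fun h => hx0 (AddMonoidAlgebra.coeff_eq_zero.1 h))
  have main : ∀ m ∈ x.coeff.support, (∀ k, k < d → (m + d • g - k • g) ∉ x.coeff.support) → False := by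
    intro m hm hout
    have hmx : x.coeff m ≠ 0 := Finsupp.mem_support_iff.1 hm
    have hcoef : (x * ∑ k ∈ Finset.range (d + 1), AddMonoidAlgebra.single (k • g) (b k)).coeff
        (m + d • g) = x.coeff m * b d := by
      rw [Finset.mul_sum, AddMonoidAlgebra.coeff_sum, Finsupp.finset_sum_apply]
      rw [Finset.sum_eq_single d]
      · rw [AddMonoidAlgebra.coeff_mul_single_apply, add_neg_cancel_right]
      · intro k hk hkd
        rw [AddMonoidAlgebra.coeff_mul_single_apply, ← sub_eq_add_neg]
        have hk' : k < d := lt_of_le_of_ne (Nat.lt_succ_iff.1 (Finset.mem_range.1 hk)) hkd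
        rw [Finsupp.notMem_support_iff.1 (hout k hk'), zero_mul]
      · intro h; exact absurd (Finset.self_mem_range_succ d) h
    rw [hx] at hcoef
    simp only [AddMonoidAlgebra.coeff_zero, Finsupp.coe_zero, Pi.zero_apply] at hcoef
    exact hmx ((hbd.mul_left_eq_zero).1 (mul_comm (x.coeff m) (b d) ▸ hcoef.symm))
  have hrw : ∀ (m : G) (k : ℕ), k < d → m + d • g - k • g = m + (d - k) • g := by
    intro m k hk
    rw [sub_nsmul g hk.le]
    abel
  rcases hg.lt_or_gt with hneg | hpos
  · refine main (x.coeff.support.min' hsupp) (x.coeff.support.min'_mem hsupp) fun k hk hmem => ?_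
    have h1 : (d - k) • g < 0 := by
      have h3 : 0 < (d - k) • (-g) := nsmul_pos (neg_pos.2 hneg) (Nat.sub_ne_zero_of_lt hk)
      rwa [smul_neg, neg_pos] at h3
    have h2 : x.coeff.support.min' hsupp + d • g - k • g < x.coeff.support.min' hsupp := by
      rw [hrw _ k hk]
      exact add_lt_of_neg_right _ h1
    exact absurd (x.coeff.support.min'_le _ hmem) (not_le.2 h2)
  · refine main (x.coeff.support.max' hsupp) (x.coeff.support.max'_mem hsupp) fun k hk hmem => ?_
    have h1 : 0 < (d - k) • g := nsmul_pos hpos (Nat.sub_ne_zero_of_lt hk)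
    have h2 : x.coeff.support.max' hsupp < x.coeff.support.max' hsupp + d • g - k • g := by
      rw [hrw _ k hk]
      exact lt_add_of_pos_right _ h1
    exact absurd (x.coeff.support.le_max' _ hmem) (not_le.2 h2)

private lemma aux_nzd {r : ℕ} {lam : Fin r → ℤ} (hlam : lam ≠ 0) {B : Type v} [CommRing B]
    (d : ℕ) (b : ℕ → B) (hbd : IsUnit (b d)) :
    (∑ k ∈ Finset.range (d + 1), AddMonoidAlgebra.single (k • lam) (b k))
      ∈ nonZeroDivisors (AddMonoidAlgebra B (Fin r → ℤ)) := by
  haveI : WellFoundedLT (Fin r) := Finite.to_wellFoundedLT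
  letI : IsOrderedAddMonoid (Lex (Fin r → ℤ)) :=
    inferInstance
  have h0 : toLex lam ≠ (0 : Lex (Fin r → ℤ)) := fun h => hlam h
  exact key_nzd (G := Lex (Fin r → ℤ)) (g := toLex lam) h0 d b hbd

/-- The Observation in Section 3.3: an element of the multiplicative set `S ⊆ A[ℤ^r]`
of the form `s = Σ_{k=0}^{d} c_k · X^{k·λ}` with `λ ≠ 0` and `c₀, c_d ∈ A^×` is a
non-zero-divisor after every extension of scalars; in particular `s` is a
non-zero-divisor in `A[ℤ^r]`, and its image in `(A/𝔭)[ℤ^r]` is a non-zero-divisor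
for every ideal `𝔭` of `A`. -/
theorem mult_set_preserves_congruences
    (A : Type u) [CommRing A]
    (r : ℕ) (hr : 0 < r) (lam : Fin r → ℤ) (hlam : lam ≠ 0)
    (d : ℕ) (c : ℕ → A) (hc0 : IsUnit (c 0)) (hcd : IsUnit (c d)) :
    (∀ (B : Type v), ∀ (_ : CommRing B) (_ : Algebra A B),
      (∑ k ∈ Finset.range (d + 1),
          AddMonoidAlgebra.single (k • lam) (algebraMap A B (c k)))
        ∈ nonZeroDivisors (AddMonoidAlgebra B (Fin r → ℤ)))
    ∧ ((∑ k ∈ Finset.range (d + 1), AddMonoidAlgebra.single (k • lam) (c k))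
        ∈ nonZeroDivisors (AddMonoidAlgebra A (Fin r → ℤ)))
    ∧ ∀ (𝔭 : Ideal A),
      (∑ k ∈ Finset.range (d + 1),
          AddMonoidAlgebra.single (k • lam) (Ideal.Quotient.mk 𝔭 (c k)))
        ∈ nonZeroDivisors (AddMonoidAlgebra (A ⧸ 𝔭) (Fin r → ℤ)) := by
  refine ⟨fun B _ _ => ?_, ?_, fun 𝔭 => ?_⟩
  · exact aux_nzd hlam d (fun k => algebraMap A B (c k)) (hcd.map (algebraMap A B))
  · exact aux_nzd hlam d c hcd
  · exact aux_nzd hlam d (fun k => Ideal.Quotient.mk 𝔭 (c k)) (hcd.map (Ideal.Quotient.mk 𝔭))
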